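/- For the geometric torus action on moduli of rank-r framed sheaves: the Laurent polynomial character χ(q_1,q_2,u_1,…,u_r) = Σ_{i,j=1}^r Σ_{□∈λ^i} ( (u_j/u_i) q_1^{-a_□(λ^i)-1} q_2^{l_□(λ^j)} + (u_i/u_j) q_1^{a_□(λ^i)} q_2^{-l_□(λ^j)-1} ) satisfies χ(q_1^{-1}, q_2^{-1}, u_1^{-1},…,u_r^{-1}) = q_1 q_2 · χ(q_1, q_2, u_1,…,u_r), reflecting that the tangent space is a symplectic representation with form of weight q_1 q_2. -/

import Mathlib

open Finset

/-- The torus character of the tangent space to the moduli of rank-`r` framed sheaves at the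
fixed point `F_{λ¹,…,λʳ}`:
`χ = Σ_{a,b=1}^{r} Σ_{□∈λᵃ} ( (u_b/u_a) q₁^{-arm_□(λᵃ)-1} q₂^{leg_□(λᵇ)}
   + (u_a/u_b) q₁^{arm_□(λᵃ)} q₂^{-leg_□(λᵇ)-1} )`,
where the partition `λᵏ` has length `L k` and parts `lam k 0 ≥ lam k 1 ≥ …`, the box
`□ = (i,j)` (0-indexed) of `λᵃ` has generalized arm `lam a i - j - 1 ∈ ℤ` and generalized leg
`(λᵇ)'_j - i - 1 ∈ ℤ` (possibly negative). -/
noncomputable def charModuli {K : Type*} [Field K] (r : ℕ) (q1 q2 : K) (u : Fin r → K)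
    (L : Fin r → ℕ) (lam : Fin r → ℕ → ℕ) : K :=
  ∑ a : Fin r, ∑ b : Fin r, ∑ i ∈ range (L a), ∑ j ∈ range (lam a i),
    (u b / u a * q1 ^ (-((lam a i : ℤ) - (j + 1)) - 1) *
        q2 ^ (((((range (L b)).filter fun k => j + 1 ≤ lam b k).card : ℤ) - (i + 1))) +
      u a / u b * q1 ^ ((lam a i : ℤ) - (j + 1)) *
        q2 ^ (-((((range (L b)).filter fun k => j + 1 ≤ lam b k).card : ℤ) - (i + 1)) - 1))

/-- The tangent character is a symplectic representation with form of weight `q₁q₂`: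
inverting all torus variables gives `χ(q₁⁻¹,q₂⁻¹,u⁻¹) = q₁ q₂ · χ(q₁,q₂,u)`. -/

lemma charModuli_key {K : Type*} [Field K] (q1 q2 a b : K)
    (h1 : q1 ≠ 0) (h2 : q2 ≠ 0) (ha : a ≠ 0) (hb : b ≠ 0) (A B : ℤ) :
    b⁻¹ / a⁻¹ * q1⁻¹ ^ (-A - 1) * q2⁻¹ ^ B + a⁻¹ / b⁻¹ * q1⁻¹ ^ A * q2⁻¹ ^ (-B - 1)
      = q1 * q2 * (b / a * q1 ^ (-A - 1) * q2 ^ B + a / b * q1 ^ A * q2 ^ (-B - 1)) := by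
  rw [inv_zpow', inv_zpow', inv_zpow', inv_zpow']
  rw [neg_sub', neg_neg, neg_sub', neg_neg, sub_neg_eq_add, sub_neg_eq_add]
  simp only [zpow_add₀ h1, zpow_add₀ h2, zpow_sub₀ h1, zpow_sub₀ h2, zpow_one, zpow_neg]
  have hA : q1 ^ A ≠ 0 := zpow_ne_zero _ h1
  have hB : q2 ^ B ≠ 0 := zpow_ne_zero _ h2
  field_simp
  ring

theorem charModuli_symplectic {K : Type*} [Field K] (r : ℕ) (q1 q2 : K) (u : Fin r → K)
    (h1 : q1 ≠ 0) (h2 : q2 ≠ 0) (hu : ∀ a, u a ≠ 0)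
    (L : Fin r → ℕ) (lam : Fin r → ℕ → ℕ)
    (hmono : ∀ a i j, i ≤ j → lam a j ≤ lam a i)
    (hvan : ∀ a i, L a ≤ i → lam a i = 0) :
    charModuli r q1⁻¹ q2⁻¹ (fun a => (u a)⁻¹) L lam
      = q1 * q2 * charModuli r q1 q2 u L lam := by
  unfold charModuli
  simp only [Finset.mul_sum]
  refine Finset.sum_congr rfl fun a _ => Finset.sum_congr rfl fun b _ =>
    Finset.sum_congr rfl fun i _ => Finset.sum_congr rfl fun j _ => ?_
  exact charModuli_key q1 q2 (u a) (u b) h1 h2 (hu a) (hu b) _ _
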